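/- (Example: pre-garbling can increase expected utility.) Let κ₁ be the channel from {0,1} to {0,1} with matrix columns κ₁(·|0) = (0.9, 0.1) and κ₁(·|1) = (0, 1), and let κ₂ be the channel with columns κ₂(·|0) = (0, 1) and κ₂(·|1) = (0.9, 0.1) (i.e. κ₂ = κ₁ composed with the input swap). Let p be the uniform distribution on {0,1} and let u : {0,1} × {0,1} → ℝ be the utility with u(0,0)=2, u(1,1)=1 and u(a,s)=0 otherwise (first argument the action, second the state). Then the optimal expected utility satisfies U(p,u,κ₁) = 1.4 and U(p,u,κ₂) = 1.45; in particular U(p,u,κ₁) < U(p,u,κ₂). -/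
import Mathlib


open Finset

/-- A probability distribution on a finite set. -/
def IsDist {S : Type} [Fintype S] (p : S → ℝ) : Prop :=
  (∀ s, 0 ≤ p s) ∧ ∑ s, p s = 1

/-- A channel from `S` to `X`: a column-stochastic matrix. -/
def IsChannel {S X : Type} [Fintype S] [Fintype X] (κ : X → S → ℝ) : Prop :=
  (∀ x s, 0 ≤ κ x s) ∧ ∀ s, ∑ x, κ x s = 1

/-- `κ₁` is a garbling of `κ₂` (the Blackwell order `κ₁ ⪯ κ₂`). -/
def IsGarbling {S X₁ X₂ : Type} [Fintype S] [Fintype X₁] [Fintype X₂]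
    (κ₁ : X₁ → S → ℝ) (κ₂ : X₂ → S → ℝ) : Prop :=
  ∃ lam : X₁ → X₂ → ℝ, IsChannel lam ∧ ∀ x₁ s, κ₁ x₁ s = ∑ x₂, lam x₁ x₂ * κ₂ x₂ s

/-- Optimal expected utility: maximum over decision rules `d : X → A`. -/
noncomputable def optUtility {S X A : Type} [Fintype S] [Fintype X] [Fintype A]
    (p : S → ℝ) (u : A × S → ℝ) (κ : X → S → ℝ) : ℝ :=
  ⨆ d : X → A, ∑ s, ∑ x, p s * κ x s * u (d x, s)

/-- Mutual information between input (with distribution `p`) and output of channel `κ`;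
terms with `κ x s = 0` are taken to be `0`. -/
noncomputable def mutualInfo {S X : Type} [Fintype S] [Fintype X]
    (p : S → ℝ) (κ : X → S → ℝ) : ℝ :=
  ∑ s, ∑ x, if κ x s = 0 then 0 else
    p s * κ x s * Real.log (κ x s / ∑ s', p s' * κ x s')

/-- Channel composition: `(κ·λ) x s = ∑ t, κ x t * λ t s`. -/
def chanComp {S T X : Type} [Fintype S] [Fintype T] [Fintype X]
    (κ : X → T → ℝ) (lam : T → S → ℝ) : X → S → ℝ :=
  fun x s => ∑ t, κ x t * lam t s

/-- Marginal on `S` of a joint distribution on `S × X₁ × X₂`. -/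
noncomputable def margS3 {S X₁ X₂ : Type} [Fintype S] [Fintype X₁] [Fintype X₂]
    (P : S × X₁ × X₂ → ℝ) (s : S) : ℝ := ∑ x₁, ∑ x₂, P (s, x₁, x₂)

/-- The channel `X₁ ← S` of conditional probabilities `P(X₁ = x₁ | S = s)`. -/
noncomputable def chan1of3 {S X₁ X₂ : Type} [Fintype S] [Fintype X₁] [Fintype X₂]
    (P : S × X₁ × X₂ → ℝ) (x₁ : X₁) (s : S) : ℝ :=
  (∑ x₂, P (s, x₁, x₂)) / margS3 P s

/-- The channel `X₂ ← S` of conditional probabilities `P(X₂ = x₂ | S = s)`. -/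
noncomputable def chan2of3 {S X₁ X₂ : Type} [Fintype S] [Fintype X₁] [Fintype X₂]
    (P : S × X₁ × X₂ → ℝ) (x₂ : X₂) (s : S) : ℝ :=
  (∑ x₁, P (s, x₁, x₂)) / margS3 P s

/-- Pushforward of a joint distribution on `S × X₁ × X₂` along `f : S → S'`. -/
noncomputable def push3 {S S' X₁ X₂ : Type} [Fintype S] [Fintype X₁] [Fintype X₂]
    [DecidableEq S'] (f : S → S') (P : S × X₁ × X₂ → ℝ) : S' × X₁ × X₂ → ℝ :=
  fun q => ∑ s ∈ Finset.univ.filter (fun s => f s = q.1), P (s, q.2.1, q.2.2)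

/-- The channel `κ₁` with columns `κ₁(·|0) = (0.9, 0.1)` and `κ₁(·|1) = (0, 1)`. -/
noncomputable def exKappa1 : Fin 2 → Fin 2 → ℝ := fun x s =>
  if x = 0 then (if s = 0 then 0.9 else 0) else (if s = 0 then 0.1 else 1)

/-- The channel `κ₂` with columns `κ₂(·|0) = (0, 1)` and `κ₂(·|1) = (0.9, 0.1)`,
i.e. `κ₁` composed with the input swap. -/
noncomputable def exKappa2 : Fin 2 → Fin 2 → ℝ := fun x s =>
  if x = 0 then (if s = 0 then 0 else 0.9) else (if s = 0 then 1 else 0.1)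


lemma mySupEq {f : (Fin 2 → Fin 2) → ℝ} {v : ℝ} (hle : ∀ d, f d ≤ v)
    (hex : ∃ d, f d = v) : (⨆ d, f d) = v :=
  le_antisymm (ciSup_le hle)
    (hex.elim fun d hd => hd ▸ le_ciSup (Set.Finite.bddAbove (Set.finite_range f)) d)

/-- Example: pre-garbling can increase expected utility:
with the uniform input distribution and the utility `u(0,0)=2, u(1,1)=1, u=0` otherwise,
the optimal expected utilities are `U(p,u,κ₁) = 1.4` and `U(p,u,κ₂) = 1.45`. -/
theorem pregarbling_increases_utility_example :
    optUtility (fun _ : Fin 2 => (1 : ℝ) / 2)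
        (fun as : Fin 2 × Fin 2 =>
          if as = (0, 0) then (2 : ℝ) else if as = (1, 1) then 1 else 0)
        exKappa1 = 1.4 ∧
    optUtility (fun _ : Fin 2 => (1 : ℝ) / 2)
        (fun as : Fin 2 × Fin 2 =>
          if as = (0, 0) then (2 : ℝ) else if as = (1, 1) then 1 else 0)
        exKappa2 = 1.45 ∧
    optUtility (fun _ : Fin 2 => (1 : ℝ) / 2)
        (fun as : Fin 2 × Fin 2 =>
          if as = (0, 0) then (2 : ℝ) else if as = (1, 1) then 1 else 0)
        exKappa1 <
      optUtility (fun _ : Fin 2 => (1 : ℝ) / 2)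
        (fun as : Fin 2 × Fin 2 =>
          if as = (0, 0) then (2 : ℝ) else if as = (1, 1) then 1 else 0)
        exKappa2 := by
  have key : ∀ d : Fin 2 → Fin 2, (d 0 = 0 ∨ d 0 = 1) ∧ (d 1 = 0 ∨ d 1 = 1) := by
    intro d; exact ⟨by omega, by omega⟩
  have h1 : optUtility (fun _ : Fin 2 => (1 : ℝ) / 2)
      (fun as : Fin 2 × Fin 2 =>
        if as = (0, 0) then (2 : ℝ) else if as = (1, 1) then 1 else 0)
      exKappa1 = 1.4 := by
    apply mySupEq
    · intro d
      obtain ⟨h0 | h0, h1 | h1⟩ := key d <;>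
        simp [Fin.sum_univ_two, exKappa1, h0, h1] <;> norm_num
    · refine ⟨fun x => x, ?_⟩
      simp [Fin.sum_univ_two, exKappa1]; norm_num
  have h2 : optUtility (fun _ : Fin 2 => (1 : ℝ) / 2)
      (fun as : Fin 2 × Fin 2 =>
        if as = (0, 0) then (2 : ℝ) else if as = (1, 1) then 1 else 0)
      exKappa2 = 1.45 := by
    apply mySupEq
    · intro d
      obtain ⟨h0 | h0, h1 | h1⟩ := key d <;>
        simp [Fin.sum_univ_two, exKappa2, h0, h1] <;> norm_num
    · refine ⟨fun x => 1 - x, ?_⟩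
      simp [Fin.sum_univ_two, exKappa2]; norm_num
  exact ⟨h1, h2, by rw [h1, h2]; norm_num⟩
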